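/- For each of the four subloops S_L, S_L^α, S_L^β, S_L^γ of T_L, the real linear span of the subloop in 𝕋 is a 16-dimensional subalgebra of 𝕋 (closed under multiplication and containing 1), and this subalgebra has zero divisors: it contains nonzero elements u, v with u·v = 0. -/

import Mathlib

/-- Iterated Cayley–Dickson doubling starting from `ℝ`. -/
def CD : ℕ → Type
  | 0 => ℝ
  | n + 1 => CD n × CD n

instance cdAddCommGroup : ∀ n, AddCommGroup (CD n)
  | 0 => inferInstanceAs (AddCommGroup ℝ)
  | n + 1 => letI := cdAddCommGroup n; inferInstanceAs (AddCommGroup (CD n × CD n))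

noncomputable instance cdModule : ∀ n, Module ℝ (CD n)
  | 0 => inferInstanceAs (Module ℝ ℝ)
  | n + 1 => letI := cdModule n; inferInstanceAs (Module ℝ (CD n × CD n))

/-- Cayley–Dickson conjugation, starting from the identity on `ℝ`. -/
def cdConj : ∀ n, CD n → CD n
  | 0, x => x
  | n + 1, x => (cdConj n x.1, -x.2)

/-- Cayley–Dickson multiplication: `(a,b)(c,d) = (ac − d b̄, ā d + c b)`. -/
def cdMul : ∀ n, CD n → CD n → CD n
  | 0, x, y => @Mul.mul ℝ _ x y
  | n + 1, x, y =>
      (cdMul n x.1 y.1 - cdMul n y.2 (cdConj n x.2),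
       cdMul n (cdConj n x.1) y.2 + cdMul n y.1 x.2)

instance cdMulInst (n : ℕ) : Mul (CD n) := ⟨cdMul n⟩

instance cdOne : ∀ n, One (CD n)
  | 0 => ⟨(1 : ℝ)⟩
  | n + 1 => letI := cdOne n; ⟨((1 : CD n), 0)⟩

/-- The standard basis elements: under a doubling step `A → A × A`, a basis element
`e k` of `A` gives `e k = (e k, 0)` and `e (k + dim A) = (0, e k)`. -/
def cdE : ∀ n, ℕ → CD n
  | 0, _ => (1 : ℝ)
  | n + 1, k => if k < 2 ^ n then (cdE n k, 0) else (0, cdE n (k - 2 ^ n))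

/-- The trigintaduonions: the 32-dimensional real Cayley–Dickson algebra. -/
abbrev TT := CD 5

/-- The 32 standard basis elements `e 0 = 1, e 1, …, e 31` of `𝕋`. -/
def e (i : ℕ) : TT := cdE 5 i

/-- The trigintaduonion loop `T_L = {±e 0, ±e 1, …, ±e 31}`. -/
def TL : Set TT := {x | ∃ i < 32, x = e i ∨ x = -e i}

/-- A subloop of `T_L`: a nonempty subset of `T_L` closed under multiplication. -/
def IsSubloop (N : Set TT) : Prop :=
  N ⊆ TL ∧ N.Nonempty ∧ ∀ x ∈ N, ∀ y ∈ N, x * y ∈ N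

/-- Two subsets of `T_L` are isomorphic (as loops) if some bijection between them
preserves multiplication. -/
def LoopIso (A B : Set TT) : Prop :=
  ∃ f : TT → TT, Set.BijOn f A B ∧ ∀ x ∈ A, ∀ y ∈ A, f (x * y) = f x * f y

/-- The standard sedenion loop `S_L = {±e i : 0 ≤ i ≤ 15}`. -/
def SL : Set TT := {x | ∃ i < 16, x = e i ∨ x = -e i}

/-- Index set of the α-sedenion loop. -/
def idxα : Set ℕ := {0, 1, 2, 3, 8, 9, 10, 11, 20, 21, 22, 23, 28, 29, 30, 31}

/-- Index set of the β-sedenion loop. -/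
def idxβ : Set ℕ := {0, 1, 2, 3, 12, 13, 14, 15, 20, 21, 22, 23, 24, 25, 26, 27}

/-- Index set of the γ-sedenion loop. -/
def idxγ : Set ℕ := {0, 1, 2, 3, 4, 5, 6, 7, 24, 25, 26, 27, 28, 29, 30, 31}

/-- The α-sedenion loop `S_L^α`. -/
def SLα : Set TT := {x | ∃ i ∈ idxα, x = e i ∨ x = -e i}

/-- The β-sedenion loop `S_L^β`. -/
def SLβ : Set TT := {x | ∃ i ∈ idxβ, x = e i ∨ x = -e i}

/-- The γ-sedenion loop `S_L^γ`. -/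
def SLγ : Set TT := {x | ∃ i ∈ idxγ, x = e i ∨ x = -e i}

/-- The octonion loop `O_L = {±e i : 0 ≤ i ≤ 7}`. -/
def OL : Set TT := {x | ∃ i < 8, x = e i ∨ x = -e i}

/-- The quasi-octonion loop `Õ_L = {±e i : i ∈ {0,1,2,3,12,13,14,15}}`. -/
def QOL : Set TT :=
  {x | ∃ i ∈ ({0, 1, 2, 3, 12, 13, 14, 15} : Set ℕ), x = e i ∨ x = -e i}

section ZeroDivAux

lemma cdE_lo (n k : ℕ) (h : k < 2 ^ n) : cdE (n + 1) k = ((cdE n k, (0 : CD n)) : CD (n + 1)) := by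
  show (if k < 2 ^ n then ((cdE n k, 0) : CD n × CD n) else (0, cdE n (k - 2 ^ n))) = _
  exact if_pos h

lemma cdE_hi (n k : ℕ) (h : ¬ k < 2 ^ n) :
    cdE (n + 1) k = (((0 : CD n), cdE n (k - 2 ^ n)) : CD (n + 1)) := by
  show (if k < 2 ^ n then ((cdE n k, 0) : CD n × CD n) else (0, cdE n (k - 2 ^ n))) = _
  exact if_neg h

/-! ### Coordinates -/

def coord : ∀ n, ℕ → CD n → ℝ
  | 0, _, x => x
  | n + 1, j, x => if j < 2 ^ n then coord n j x.1 else coord n (j - 2 ^ n) x.2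

lemma coord_add : ∀ n (j : ℕ) (x y : CD n), coord n j (x + y) = coord n j x + coord n j y
  | 0, _, _, _ => rfl
  | n + 1, j, x, y => by
      show (if j < 2 ^ n then coord n j (x.1 + y.1) else coord n (j - 2 ^ n) (x.2 + y.2)) = _
      rw [coord, coord]
      split <;> rw [coord_add n]

lemma coord_smul : ∀ n (j : ℕ) (r : ℝ) (x : CD n), coord n j (r • x) = r * coord n j x
  | 0, _, _, _ => rfl
  | n + 1, j, r, x => by
      show (if j < 2 ^ n then coord n j (r • x.1) else coord n (j - 2 ^ n) (r • x.2)) = _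
      rw [coord]
      split <;> rw [coord_smul n]

noncomputable def coordLM (n j : ℕ) : CD n →ₗ[ℝ] ℝ where
  toFun := coord n j
  map_add' := coord_add n j
  map_smul' := coord_smul n j

lemma coord_zero : ∀ n (j : ℕ), coord n j (0 : CD n) = 0
  | 0, _ => rfl
  | n + 1, j => by
      show (if j < 2 ^ n then coord n j (0 : CD n) else coord n (j - 2 ^ n) (0 : CD n)) = 0
      split <;> rw [coord_zero n]

lemma coord_cdE : ∀ n (i j : ℕ), i < 2 ^ n → j < 2 ^ n →
    coord n j (cdE n i) = if i = j then 1 else 0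
  | 0, i, j, hi, hj => by
      interval_cases i <;> interval_cases j <;> rfl
  | n + 1, i, j, hi, hj => by
      rw [cdE, coord]
      rw [pow_succ] at hi hj
      by_cases h1 : i < 2 ^ n <;> by_cases h2 : j < 2 ^ n <;>
        simp only [h1, h2, if_true, if_false, if_pos, if_neg, not_false_iff]
      · exact coord_cdE n i j h1 h2
      · show coord n (j - 2 ^ n) (0 : CD n) = _
        rw [coord_zero n, if_neg (by omega)]
      · show coord n j (0 : CD n) = _
        rw [coord_zero n, if_neg (by omega)]
      · show coord n (j - 2 ^ n) (cdE n (i - 2 ^ n)) = _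
        rw [coord_cdE n (i - 2 ^ n) (j - 2 ^ n) (by omega) (by omega)]
        by_cases h : i = j
        · rw [if_pos (by omega), if_pos h]
        · rw [if_neg (by omega), if_neg h]

lemma cdE_zero : ∀ n, cdE n 0 = (1 : CD n)
  | 0 => rfl
  | n + 1 => by
      rw [cdE_lo n 0 (by positivity)]
      show (cdE n 0, (0 : CD n)) = ((1 : CD n), 0)
      rw [cdE_zero n]

/-! ### Bilinearity of the multiplication -/

lemma cdConj_add : ∀ n (x y : CD n), cdConj n (x + y) = cdConj n x + cdConj n y
  | 0, _, _ => rfl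
  | n + 1, x, y => by
      show (cdConj n (x.1 + y.1), -(x.2 + y.2)) = (cdConj n x.1 + cdConj n y.1, -x.2 + -y.2)
      rw [cdConj_add n, neg_add]

lemma cdConj_smul : ∀ n (r : ℝ) (x : CD n), cdConj n (r • x) = r • cdConj n x
  | 0, _, _ => rfl
  | n + 1, r, x => by
      show (cdConj n (r • x.1), -(r • x.2)) = (r • cdConj n x.1, r • -x.2)
      rw [cdConj_smul n, smul_neg]

lemma cdConj_zero (n : ℕ) : cdConj n (0 : CD n) = 0 := by
  have h := cdConj_smul n 0 (0 : CD n)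
  rwa [zero_smul, zero_smul] at h

lemma cdMul_bilin_add : ∀ n, (∀ x y z : CD n, cdMul n (x + y) z = cdMul n x z + cdMul n y z) ∧
    (∀ x y z : CD n, cdMul n x (y + z) = cdMul n x y + cdMul n x z)
  | 0 => ⟨fun x y z => @add_mul ℝ _ _ _ x y z, fun x y z => @mul_add ℝ _ _ _ x y z⟩
  | n + 1 => by
      obtain ⟨ihl, ihr⟩ := cdMul_bilin_add n
      constructor
      · intro x y z
        show (cdMul n (x.1 + y.1) z.1 - cdMul n z.2 (cdConj n (x.2 + y.2)),
              cdMul n (cdConj n (x.1 + y.1)) z.2 + cdMul n z.1 (x.2 + y.2)) =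
          (_ + _, _ + _)
        rw [cdConj_add, cdConj_add, ihl, ihr, ihl, ihr]
        show _ = (cdMul n x.1 z.1 - cdMul n z.2 (cdConj n x.2) +
            (cdMul n y.1 z.1 - cdMul n z.2 (cdConj n y.2)),
            cdMul n (cdConj n x.1) z.2 + cdMul n z.1 x.2 +
            (cdMul n (cdConj n y.1) z.2 + cdMul n z.1 y.2))
        simp only [Prod.mk.injEq]; exact ⟨by abel, by abel⟩
      · intro x y z
        show (cdMul n x.1 (y.1 + z.1) - cdMul n (y.2 + z.2) (cdConj n x.2),
              cdMul n (cdConj n x.1) (y.2 + z.2) + cdMul n (y.1 + z.1) x.2) =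
          (_ + _, _ + _)
        rw [ihl, ihr, ihl, ihr]
        show _ = (cdMul n x.1 y.1 - cdMul n y.2 (cdConj n x.2) +
            (cdMul n x.1 z.1 - cdMul n z.2 (cdConj n x.2)),
            cdMul n (cdConj n x.1) y.2 + cdMul n y.1 x.2 +
            (cdMul n (cdConj n x.1) z.2 + cdMul n z.1 x.2))
        simp only [Prod.mk.injEq]; exact ⟨by abel, by abel⟩

lemma cdMul_bilin_smul : ∀ n,
    (∀ (r : ℝ) (x y : CD n), cdMul n (r • x) y = r • cdMul n x y) ∧
    (∀ (r : ℝ) (x y : CD n), cdMul n x (r • y) = r • cdMul n x y)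
  | 0 => ⟨fun r x y => @mul_assoc ℝ _ r x y, fun r x y => @mul_left_comm ℝ _ x r y⟩
  | n + 1 => by
      obtain ⟨ihl, ihr⟩ := cdMul_bilin_smul n
      constructor
      · intro r x y
        show (cdMul n (r • x.1) y.1 - cdMul n y.2 (cdConj n (r • x.2)),
              cdMul n (cdConj n (r • x.1)) y.2 + cdMul n y.1 (r • x.2)) = _
        rw [cdConj_smul, cdConj_smul, ihl, ihr, ihl, ihr]
        show _ = (r • (cdMul n x.1 y.1 - cdMul n y.2 (cdConj n x.2)),
                  r • (cdMul n (cdConj n x.1) y.2 + cdMul n y.1 x.2))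
        rw [smul_sub, smul_add]
      · intro r x y
        show (cdMul n x.1 (r • y.1) - cdMul n (r • y.2) (cdConj n x.2),
              cdMul n (cdConj n x.1) (r • y.2) + cdMul n (r • y.1) x.2) = _
        rw [ihl, ihr, ihl, ihr]
        show _ = (r • (cdMul n x.1 y.1 - cdMul n y.2 (cdConj n x.2)),
                  r • (cdMul n (cdConj n x.1) y.2 + cdMul n y.1 x.2))
        rw [smul_sub, smul_add]

lemma cdMul_zero_left (n : ℕ) (x : CD n) : cdMul n 0 x = 0 := by
  have h := (cdMul_bilin_smul n).1 0 0 x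
  rwa [zero_smul, zero_smul] at h

lemma cdMul_zero_right (n : ℕ) (x : CD n) : cdMul n x 0 = 0 := by
  have h := (cdMul_bilin_smul n).2 0 x 0
  rwa [zero_smul, zero_smul] at h

lemma cdMul_neg_left (n : ℕ) (x y : CD n) : cdMul n (-x) y = -(cdMul n x y) := by
  rw [← neg_one_smul ℝ x, (cdMul_bilin_smul n).1, neg_one_smul]

lemma cdMul_neg_right (n : ℕ) (x y : CD n) : cdMul n x (-y) = -(cdMul n x y) := by
  rw [← neg_one_smul ℝ y, (cdMul_bilin_smul n).2, neg_one_smul]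

/-! ### The sign and index of a product of basis elements -/

def cdSgn : ℕ → ℕ → ℕ → Bool
  | 0, _, _ => true
  | n + 1, i, j =>
    if i < 2 ^ n then
      if j < 2 ^ n then cdSgn n i j
      else if i = 0 then cdSgn n i (j - 2 ^ n) else !cdSgn n i (j - 2 ^ n)
    else
      if j < 2 ^ n then cdSgn n j (i - 2 ^ n)
      else if i - 2 ^ n = 0 then !cdSgn n (j - 2 ^ n) (i - 2 ^ n)
        else cdSgn n (j - 2 ^ n) (i - 2 ^ n)

def cdIdx : ℕ → ℕ → ℕ → ℕ
  | 0, _, _ => 0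
  | n + 1, i, j =>
    if i < 2 ^ n then
      if j < 2 ^ n then cdIdx n i j
      else cdIdx n i (j - 2 ^ n) + 2 ^ n
    else
      if j < 2 ^ n then cdIdx n j (i - 2 ^ n) + 2 ^ n
      else cdIdx n (j - 2 ^ n) (i - 2 ^ n)

lemma cdIdx_lt : ∀ n i j, i < 2 ^ n → j < 2 ^ n → cdIdx n i j < 2 ^ n
  | 0, _, _, hi, hj => by simpa [cdIdx] using Nat.one_pos
  | n + 1, i, j, hi, hj => by
      rw [cdIdx]
      rw [pow_succ] at hi hj ⊢
      by_cases h1 : i < 2 ^ n <;> by_cases h2 : j < 2 ^ n <;>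
        simp only [h1, h2, if_true, if_false]
      · have := cdIdx_lt n i j h1 h2; omega
      · have := cdIdx_lt n i (j - 2 ^ n) h1 (by omega); omega
      · have := cdIdx_lt n j (i - 2 ^ n) h2 (by omega); omega
      · have := cdIdx_lt n (j - 2 ^ n) (i - 2 ^ n) (by omega) (by omega); omega

lemma cdConj_cdE : ∀ n (k : ℕ), k < 2 ^ n →
    cdConj n (cdE n k) = if k = 0 then cdE n k else -(cdE n k)
  | 0, k, hk => by interval_cases k; rfl
  | n + 1, k, hk => by
      rw [pow_succ] at hk
      by_cases h1 : k < 2 ^ n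
      · rw [cdE_lo n k h1]
        show (cdConj n (cdE n k), -(0 : CD n)) = _
        rw [cdConj_cdE n k h1, neg_zero]
        by_cases h0 : k = 0
        · erw [if_pos h0, if_pos h0]
        · erw [if_neg h0, if_neg h0]
          show _ = (-(cdE n k), -(0 : CD n))
          rw [neg_zero]
      · rw [cdE_hi n k h1]
        show (cdConj n (0 : CD n), -(cdE n (k - 2 ^ n))) = _
        erw [cdConj_zero, if_neg (by omega)]
        show _ = (-(0 : CD n), -(cdE n (k - 2 ^ n)))
        rw [neg_zero]

lemma CD_neg_pair {n : ℕ} (a b : CD n) : (-((a, b) : CD (n + 1))) = (-a, -b) := rfl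

lemma cdMul_pair (n : ℕ) (a b c d : CD n) :
    cdMul (n + 1) (a, b) (c, d) =
      (cdMul n a c - cdMul n d (cdConj n b), cdMul n (cdConj n a) d + cdMul n c b) := rfl

lemma cdMul_cdE : ∀ n (i j : ℕ), i < 2 ^ n → j < 2 ^ n →
    cdMul n (cdE n i) (cdE n j) =
      if cdSgn n i j then cdE n (cdIdx n i j) else -(cdE n (cdIdx n i j))
  | 0, i, j, hi, hj => by
      interval_cases i; interval_cases j
      show (1 : ℝ) * 1 = _
      simp [cdSgn, cdIdx, cdE]
  | n + 1, i, j, hi, hj => by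
      rw [pow_succ] at hi hj
      by_cases h1 : i < 2 ^ n <;> by_cases h2 : j < 2 ^ n
      · -- low, low
        have hidx := cdIdx_lt n i j h1 h2
        have hIH := cdMul_cdE n i j h1 h2
        rw [cdE_lo n i h1, cdE_lo n j h2, cdMul_pair, cdSgn, cdIdx,
          if_pos h1, if_pos h1, if_pos h2, if_pos h2, cdE_lo n _ hidx]
        simp only [cdConj_zero, cdMul_zero_left, cdMul_zero_right, sub_zero, add_zero, hIH]
        by_cases hs : cdSgn n i j = true
        · erw [if_pos hs, if_pos hs]
        · erw [if_neg hs, if_neg hs, CD_neg_pair, neg_zero]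
      · -- low, high
        have hj' : j - 2 ^ n < 2 ^ n := by omega
        have hidx := cdIdx_lt n i (j - 2 ^ n) h1 hj'
        have hIH := cdMul_cdE n i (j - 2 ^ n) h1 hj'
        rw [cdE_lo n i h1, cdE_hi n j h2, cdMul_pair, cdSgn, cdIdx,
          if_pos h1, if_pos h1, if_neg h2, if_neg h2,
          cdE_hi n _ (by omega : ¬ (cdIdx n i (j - 2 ^ n) + 2 ^ n < 2 ^ n)), Nat.add_sub_cancel,
          cdConj_cdE n i h1]
        simp only [cdConj_zero, cdMul_zero_left, cdMul_zero_right, sub_zero, add_zero, zero_add]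
        by_cases h0 : i = 0
        · rw [if_pos h0, if_pos h0, hIH]
          by_cases hs : cdSgn n i (j - 2 ^ n) = true
          · erw [if_pos hs, if_pos hs]
          · erw [if_neg hs, if_neg hs, CD_neg_pair, neg_zero]
        · rw [if_neg h0, if_neg h0, cdMul_neg_left, hIH]
          by_cases hs : cdSgn n i (j - 2 ^ n) = true
          · erw [if_pos hs, hs, Bool.not_true, if_neg Bool.false_ne_true, CD_neg_pair, neg_zero]
          · have hs' := Bool.eq_false_iff.mpr hs
            erw [if_neg hs, neg_neg, hs', Bool.not_false, if_pos rfl]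
      · -- high, low
        have hi' : i - 2 ^ n < 2 ^ n := by omega
        have hidx := cdIdx_lt n j (i - 2 ^ n) h2 hi'
        have hIH := cdMul_cdE n j (i - 2 ^ n) h2 hi'
        rw [cdE_hi n i h1, cdE_lo n j h2, cdMul_pair, cdSgn, cdIdx,
          if_neg h1, if_neg h1, if_pos h2, if_pos h2,
          cdE_hi n _ (by omega : ¬ (cdIdx n j (i - 2 ^ n) + 2 ^ n < 2 ^ n)), Nat.add_sub_cancel]
        simp only [cdConj_zero, cdMul_zero_left, cdMul_zero_right, sub_zero, zero_add,
          add_zero, hIH]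
        by_cases hs : cdSgn n j (i - 2 ^ n) = true
        · erw [if_pos hs, if_pos hs]
        · erw [if_neg hs, if_neg hs, CD_neg_pair, neg_zero]
      · -- high, high
        have hi' : i - 2 ^ n < 2 ^ n := by omega
        have hj' : j - 2 ^ n < 2 ^ n := by omega
        have hidx := cdIdx_lt n (j - 2 ^ n) (i - 2 ^ n) hj' hi'
        have hIH := cdMul_cdE n (j - 2 ^ n) (i - 2 ^ n) hj' hi'
        rw [cdE_hi n i h1, cdE_hi n j h2, cdMul_pair, cdSgn, cdIdx,
          if_neg h1, if_neg h1, if_neg h2, if_neg h2, cdE_lo n _ hidx,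
          cdConj_cdE n (i - 2 ^ n) hi']
        simp only [cdConj_zero, cdMul_zero_left, cdMul_zero_right, zero_sub, add_zero, zero_add]
        by_cases h0 : i - 2 ^ n = 0
        · rw [if_pos h0, if_pos h0, hIH]
          by_cases hs : cdSgn n (j - 2 ^ n) (i - 2 ^ n) = true
          · erw [if_pos hs, hs, Bool.not_true, if_neg Bool.false_ne_true, CD_neg_pair, neg_zero]
          · have hs' := Bool.eq_false_iff.mpr hs
            erw [if_neg hs, neg_neg, hs', Bool.not_false, if_pos rfl]
        · rw [if_neg h0, if_neg h0, cdMul_neg_right, neg_neg, hIH]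
          by_cases hs : cdSgn n (j - 2 ^ n) (i - 2 ^ n) = true
          · erw [if_pos hs, if_pos hs]
          · erw [if_neg hs, if_neg hs, CD_neg_pair, neg_zero]

end ZeroDivAux
section MasterPart

/-! ### Multiplication lemmas at the level of `TT` -/

lemma tt_add_mul (x y z : TT) : (x + y) * z = x * z + y * z := (cdMul_bilin_add 5).1 x y z
lemma tt_mul_add (x y z : TT) : x * (y + z) = x * y + x * z := (cdMul_bilin_add 5).2 x y z
lemma tt_smul_mul (r : ℝ) (x y : TT) : (r • x) * y = r • (x * y) := (cdMul_bilin_smul 5).1 r x y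
lemma tt_mul_smul (r : ℝ) (x y : TT) : x * (r • y) = r • (x * y) := (cdMul_bilin_smul 5).2 r x y
lemma tt_zero_mul (x : TT) : 0 * x = 0 := cdMul_zero_left 5 x
lemma tt_mul_zero (x : TT) : x * 0 = 0 := cdMul_zero_right 5 x
lemma tt_neg_mul (x y : TT) : (-x) * y = -(x * y) := cdMul_neg_left 5 x y
lemma tt_mul_neg (x y : TT) : x * (-y) = -(x * y) := cdMul_neg_right 5 x y
lemma tt_mul_sub (x y z : TT) : x * (y - z) = x * y - x * z := by
  rw [sub_eq_add_neg, tt_mul_add, tt_mul_neg, ← sub_eq_add_neg]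

lemma e_mul_e (i j : ℕ) (hi : i < 32) (hj : j < 32) :
    e i * e j = if cdSgn 5 i j then e (cdIdx 5 i j) else -e (cdIdx 5 i j) := by
  have h32 : (32 : ℕ) = 2 ^ 5 := by norm_num
  exact cdMul_cdE 5 i j (h32 ▸ hi) (h32 ▸ hj)

lemma cdIdx_lt32 (i j : ℕ) (hi : i < 32) (hj : j < 32) : cdIdx 5 i j < 32 := by
  have h32 : (32 : ℕ) = 2 ^ 5 := by norm_num
  rw [h32] at *
  exact cdIdx_lt 5 i j hi hj

/-! ### Linear independence of the basis elements -/

lemma coordLM_e (i j : ℕ) (hi : i < 32) (hj : j < 32) :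
    coordLM 5 j (e i) = if i = j then 1 else 0 := by
  have h32 : (32 : ℕ) = 2 ^ 5 := by norm_num
  show coord 5 j (cdE 5 i) = _
  exact coord_cdE 5 i j (h32 ▸ hi) (h32 ▸ hj)

lemma linIndepE : LinearIndependent ℝ (fun i : Fin 32 => e (i : ℕ)) := by
  rw [Fintype.linearIndependent_iff]
  intro gc hg i
  have h2 : ∀ j : Fin 32, coordLM 5 (i : ℕ) (gc j • e (j : ℕ)) = if j = i then gc j else 0 := by
    intro j
    rw [map_smul, coordLM_e j i j.isLt i.isLt]
    by_cases h : j = i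
    · rw [if_pos (by rw [h]), if_pos h, smul_eq_mul, mul_one]
    · rw [if_neg (fun hh => h (Fin.ext hh)), if_neg h, smul_zero]
  have h3 := congrArg (coordLM 5 (i : ℕ)) hg
  rw [map_sum, map_zero, Finset.sum_congr rfl (fun j _ => h2 j),
    Finset.sum_ite_eq' Finset.univ i (fun j => gc j), if_pos (Finset.mem_univ i)] at h3
  exact h3

/-! ### The master lemma -/

theorem master_subloop (L : List ℕ) (hlen : L.length = 16) (hnd : L.Nodup)
    (hlt : ∀ i ∈ L, i < 32) (h0 : 0 ∈ L)
    (hclosed : ∀ i ∈ L, ∀ j ∈ L, cdIdx 5 i j ∈ L)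
    (a b c d : ℕ) (ha : a ∈ L) (hb : b ∈ L) (hc : c ∈ L) (hd : d ∈ L)
    (hab : a ≠ b) (hcd : c ≠ d)
    (hk1 : cdIdx 5 a c = cdIdx 5 b d) (hk2 : cdIdx 5 a d = cdIdx 5 b c)
    (hs1 : cdSgn 5 a c = cdSgn 5 b d) (hs2 : cdSgn 5 a d = cdSgn 5 b c)
    (S : Set TT) (hS : S = {x | ∃ i ∈ L, x = e i ∨ x = -e i}) :
    Module.finrank ℝ (Submodule.span ℝ S) = 16 ∧
      (∀ u ∈ Submodule.span ℝ S, ∀ v ∈ Submodule.span ℝ S,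
        u * v ∈ Submodule.span ℝ S) ∧
      (1 : TT) ∈ Submodule.span ℝ S ∧
      (∃ u ∈ Submodule.span ℝ S, ∃ v ∈ Submodule.span ℝ S,
        u ≠ 0 ∧ v ≠ 0 ∧ u * v = 0) := by
  subst hS
  set S : Set TT := {x | ∃ i ∈ L, x = e i ∨ x = -e i} with hSdef
  have hmemS : ∀ i ∈ L, e i ∈ S := fun i hi => ⟨i, hi, Or.inl rfl⟩
  have hmemS' : ∀ i ∈ L, -e i ∈ S := fun i hi => ⟨i, hi, Or.inr rfl⟩
  -- the basis family
  let g : Fin 16 → Fin 32 := fun k =>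
    ⟨L.get (Fin.cast hlen.symm k), hlt _ (L.get_mem _)⟩
  let f : Fin 16 → TT := (fun i : Fin 32 => e (i : ℕ)) ∘ g
  have hginj : Function.Injective g := by
    intro k1 k2 hk
    have h2 : L.get (Fin.cast hlen.symm k1) = L.get (Fin.cast hlen.symm k2) :=
      congrArg Fin.val hk
    have h3 := (hnd.get_inj_iff).mp h2
    exact Fin.ext (by simpa [Fin.coe_cast] using congrArg Fin.val h3)
  have hf : LinearIndependent ℝ f := linIndepE.comp g hginj
  have hspan : Submodule.span ℝ S = Submodule.span ℝ (Set.range f) := by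
    apply le_antisymm
    · rw [Submodule.span_le]
      rintro x ⟨i, hi, hx⟩
      obtain ⟨m, hm⟩ := List.mem_iff_get.mp hi
      have hx' : e i ∈ Set.range f := ⟨Fin.cast hlen m, by rw [← hm]; rfl⟩
      rcases hx with rfl | rfl
      · exact Submodule.subset_span hx'
      · exact Submodule.neg_mem _ (Submodule.subset_span hx')
    · rw [Submodule.span_le]
      rintro x ⟨k, rfl⟩
      exact Submodule.subset_span (hmemS _ (L.get_mem _))
  refine ⟨?_, ?_, ?_, ?_⟩
  · rw [hspan, finrank_span_eq_card hf, Fintype.card_fin]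
  · -- closure under multiplication
    have hnegS : ∀ z ∈ S, -z ∈ S := by
      rintro z ⟨i, hi, rfl | rfl⟩
      · exact hmemS' i hi
      · rw [neg_neg]; exact hmemS i hi
    have hSmulS : ∀ x ∈ S, ∀ y ∈ S, x * y ∈ S := by
      rintro x ⟨i, hi, hx⟩ y ⟨j, hj, hy⟩
      have hbase : e i * e j ∈ S := by
        rw [e_mul_e i j (hlt i hi) (hlt j hj)]
        split
        · exact hmemS _ (hclosed i hi j hj)
        · exact hmemS' _ (hclosed i hi j hj)
      rcases hx with rfl | rfl <;> rcases hy with rfl | rfl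
      · exact hbase
      · rw [tt_mul_neg]; exact hnegS _ hbase
      · rw [tt_neg_mul]; exact hnegS _ hbase
      · rw [tt_neg_mul, tt_mul_neg, neg_neg]; exact hbase
    intro u hu
    induction hu using Submodule.span_induction with
    | mem x hx =>
        intro v hv
        induction hv using Submodule.span_induction with
        | mem y hy => exact Submodule.subset_span (hSmulS x hx y hy)
        | zero => rw [tt_mul_zero]; exact Submodule.zero_mem _
        | add y z _ _ ihy ihz => rw [tt_mul_add]; exact Submodule.add_mem _ ihy ihz
        | smul r y _ ihy => rw [tt_mul_smul]; exact Submodule.smul_mem _ r ihy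
    | zero => intro v hv; rw [tt_zero_mul]; exact Submodule.zero_mem _
    | add x y _ _ ihx ihy =>
        intro v hv
        rw [tt_add_mul]; exact Submodule.add_mem _ (ihx v hv) (ihy v hv)
    | smul r x _ ihx =>
        intro v hv
        rw [tt_smul_mul]; exact Submodule.smul_mem _ r (ihx v hv)
  · -- contains 1
    have : e 0 = (1 : TT) := cdE_zero 5
    exact this ▸ Submodule.subset_span (hmemS 0 h0)
  · -- zero divisors
    refine ⟨e a + e b, Submodule.add_mem _ (Submodule.subset_span (hmemS a ha))
        (Submodule.subset_span (hmemS b hb)),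
      e c - e d, Submodule.sub_mem _ (Submodule.subset_span (hmemS c hc))
        (Submodule.subset_span (hmemS d hd)), ?_, ?_, ?_⟩
    · intro h
      have h1 := congrArg (coordLM 5 a) h
      rw [map_add, map_zero, coordLM_e a a (hlt a ha) (hlt a ha),
        coordLM_e b a (hlt b hb) (hlt a ha), if_pos rfl,
        if_neg (fun hh => hab hh.symm)] at h1
      norm_num at h1
    · intro h
      have h1 := congrArg (coordLM 5 c) h
      rw [map_sub, map_zero, coordLM_e c c (hlt c hc) (hlt c hc),
        coordLM_e d c (hlt d hd) (hlt c hc), if_pos rfl,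
        if_neg (fun hh => hcd hh.symm)] at h1
      norm_num at h1
    · rw [tt_add_mul, tt_mul_sub, tt_mul_sub,
        e_mul_e a c (hlt a ha) (hlt c hc), e_mul_e a d (hlt a ha) (hlt d hd),
        e_mul_e b c (hlt b hb) (hlt c hc), e_mul_e b d (hlt b hb) (hlt d hd),
        hk1, hk2, hs1, hs2]
      abel

end MasterPart

/-- The real linear span of each of `S_L, S_L^α, S_L^β, S_L^γ` is a 16-dimensional
subalgebra of `𝕋` (closed under multiplication and containing 1) having zero
divisors. -/
theorem stmt19 :
    ∀ S ∈ ({SL, SLα, SLβ, SLγ} : Set (Set TT)),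
      Module.finrank ℝ (Submodule.span ℝ S) = 16 ∧
      (∀ u ∈ Submodule.span ℝ S, ∀ v ∈ Submodule.span ℝ S,
        u * v ∈ Submodule.span ℝ S) ∧
      (1 : TT) ∈ Submodule.span ℝ S ∧
      (∃ u ∈ Submodule.span ℝ S, ∃ v ∈ Submodule.span ℝ S,
        u ≠ 0 ∧ v ≠ 0 ∧ u * v = 0) := by
  intro S hS
  simp only [Set.mem_insert_iff, Set.mem_singleton_iff] at hS
  rcases hS with rfl | rfl | rfl | rfl
  · refine master_subloop [0,1,2,3,4,5,6,7,8,9,10,11,12,13,14,15] rfl (by decide)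
      (by decide) (by decide) (by decide) 1 10 4 15 (by decide) (by decide) (by decide)
      (by decide) (by decide) (by decide) (by decide) (by decide) (by decide) (by decide)
      SL ?_
    ext x
    simp only [SL, Set.mem_setOf_eq]
    constructor
    · rintro ⟨i, hi, h⟩
      refine ⟨i, ?_, h⟩
      simp only [List.mem_cons, List.not_mem_nil, or_false]
      omega
    · rintro ⟨i, hi, h⟩
      refine ⟨i, ?_, h⟩
      simp only [List.mem_cons, List.not_mem_nil, or_false] at hi
      omega
  · refine master_subloop [0,1,2,3,8,9,10,11,20,21,22,23,28,29,30,31] rfl (by decide)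
      (by decide) (by decide) (by decide) 1 10 20 31 (by decide) (by decide) (by decide)
      (by decide) (by decide) (by decide) (by decide) (by decide) (by decide) (by decide)
      SLα ?_
    ext x
    simp only [SLα, idxα, Set.mem_setOf_eq, Set.mem_insert_iff, Set.mem_singleton_iff]
    constructor
    · rintro ⟨i, hi, h⟩
      refine ⟨i, ?_, h⟩
      simp only [List.mem_cons, List.not_mem_nil, or_false]
      omega
    · rintro ⟨i, hi, h⟩
      refine ⟨i, ?_, h⟩
      simp only [List.mem_cons, List.not_mem_nil, or_false] at hi
      omega
  · refine master_subloop [0,1,2,3,12,13,14,15,20,21,22,23,24,25,26,27] rfl (by decide)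
      (by decide) (by decide) (by decide) 1 12 3 14 (by decide) (by decide) (by decide)
      (by decide) (by decide) (by decide) (by decide) (by decide) (by decide) (by decide)
      SLβ ?_
    ext x
    simp only [SLβ, idxβ, Set.mem_setOf_eq, Set.mem_insert_iff, Set.mem_singleton_iff]
    constructor
    · rintro ⟨i, hi, h⟩
      refine ⟨i, ?_, h⟩
      simp only [List.mem_cons, List.not_mem_nil, or_false]
      omega
    · rintro ⟨i, hi, h⟩
      refine ⟨i, ?_, h⟩
      simp only [List.mem_cons, List.not_mem_nil, or_false] at hi
      omega
  · refine master_subloop [0,1,2,3,4,5,6,7,24,25,26,27,28,29,30,31] rfl (by decide)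
      (by decide) (by decide) (by decide) 1 24 3 26 (by decide) (by decide) (by decide)
      (by decide) (by decide) (by decide) (by decide) (by decide) (by decide) (by decide)
      SLγ ?_
    ext x
    simp only [SLγ, idxγ, Set.mem_setOf_eq, Set.mem_insert_iff, Set.mem_singleton_iff]
    constructor
    · rintro ⟨i, hi, h⟩
      refine ⟨i, ?_, h⟩
      simp only [List.mem_cons, List.not_mem_nil, or_false]
      omega
    · rintro ⟨i, hi, h⟩
      refine ⟨i, ?_, h⟩
      simp only [List.mem_cons, List.not_mem_nil, or_false] at hi
      omega
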